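/- Let ψ be a smooth, rapidly decaying function on ℝ^q (q particles in one dimension) with ∫|ψ|² = 1, and let ρ_ψ(x) = q ∫ |ψ(x₁,…,x_{q−1},x)|² dx₁⋯dx_{q−1} be its density (assuming ψ symmetric). Then ∑_{i=1}^q ∫_{ℝ^q} |∇_i ψ|² dx ≥ ∫_ℝ |(√ρ_ψ)'(x)|² dx, with equality when ψ(x₁,…,x_q) = ∏_i φ(x_i) with φ = √(ρ_ψ/q). -/

import Mathlib

open MeasureTheory Real

/-- The one-particle density of a symmetric `q`-particle wave function in 1D,
`ρ_ψ(x) = q ∫ |ψ(x₁,…,x_{q−1},x)|² dx₁⋯dx_{q−1}`, with `q = m+1`. -/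
noncomputable def densityHO (m : ℕ) (ψ : (Fin (m + 1) → ℝ) → ℂ) (x : ℝ) : ℝ :=
  (m + 1 : ℝ) * ∫ y : Fin m → ℝ, ‖ψ (Fin.snoc y x)‖ ^ 2

/-- The many-body kinetic energy `∑ᵢ ∫ |∂ᵢψ|²`. -/
noncomputable def kineticHO (m : ℕ) (ψ : (Fin (m + 1) → ℝ) → ℂ) : ℝ :=
  ∑ i : Fin (m + 1), ∫ x : Fin (m + 1) → ℝ,
    ‖deriv (fun t : ℝ => ψ (Function.update x i t)) (x i)‖ ^ 2

variable {n : ℕ}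

lemma snoc_eq_update {m : ℕ} (y : Fin m → ℝ) (t : ℝ) :
    (Fin.snoc y t : Fin (m+1) → ℝ) = Function.update (Fin.snoc y 0) (Fin.last m) t := by
  funext j
  induction j using Fin.lastCases with
  | last => simp
  | cast j => simp [Function.update_of_ne (Fin.castSucc_lt_last j).ne]

lemma hasDerivAt_snoc {m : ℕ} (y : Fin m → ℝ) (t : ℝ) :
    HasDerivAt (fun s : ℝ => (Fin.snoc y s : Fin (m+1) → ℝ)) (Pi.single (Fin.last m) 1) t := by
  have h := hasDerivAt_update (𝕜 := ℝ) (Fin.snoc y (0:ℝ)) (Fin.last m) t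
  refine h.congr_of_eventuallyEq (Filter.Eventually.of_forall fun s => ?_)
  exact snoc_eq_update y s

lemma hasDerivAt_comp_update (ψ : SchwartzMap (Fin n → ℝ) ℂ) (x : Fin n → ℝ) (i : Fin n)
    (t : ℝ) :
    HasDerivAt (fun s : ℝ => ψ (Function.update x i s))
      (fderiv ℝ ψ (Function.update x i t) (Pi.single i 1)) t :=
  (ψ.differentiableAt.hasFDerivAt).comp_hasDerivAt t (hasDerivAt_update x i t)

lemma deriv_comp_update (ψ : SchwartzMap (Fin n → ℝ) ℂ) (x : Fin n → ℝ) (i : Fin n) :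
    deriv (fun s : ℝ => ψ (Function.update x i s)) (x i)
      = fderiv ℝ ψ x (Pi.single i 1) := by
  have := (hasDerivAt_comp_update ψ x i (x i)).deriv
  rwa [Function.update_eq_self] at this

lemma hasDerivAt_comp_snoc {m : ℕ} (ψ : SchwartzMap (Fin (m+1) → ℝ) ℂ) (y : Fin m → ℝ)
    (t : ℝ) :
    HasDerivAt (fun s : ℝ => ψ (Fin.snoc y s))
      (fderiv ℝ ψ (Fin.snoc y t) (Pi.single (Fin.last m) 1)) t :=
  (ψ.differentiableAt.hasFDerivAt).comp_hasDerivAt t (hasDerivAt_snoc y t)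

section decay
variable {m : ℕ}

lemma schwartz_decay_bound (f : SchwartzMap (Fin (m+1) → ℝ) ℂ) (k : ℕ) :
    ∃ C : ℝ, 0 < C ∧ ∀ x, ‖f x‖ ≤ C * (1 + ‖x‖) ^ (-(k:ℝ)) := by
  refine ⟨2 ^ k * (Finset.Iic ((k,0) : ℕ × ℕ)).sup (fun p => SchwartzMap.seminorm ℝ p.1 p.2) f
      + 1, by positivity, fun x => ?_⟩
  have h := SchwartzMap.one_add_le_sup_seminorm_apply (𝕜 := ℝ) (m := (k, 0))
    (k := k) (n := 0) le_rfl le_rfl f x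
  rw [norm_iteratedFDeriv_zero] at h
  have hpos : (0:ℝ) < (1 + ‖x‖) ^ k := by positivity
  rw [Real.rpow_neg (by positivity), Real.rpow_natCast]
  rw [← div_eq_mul_inv, le_div_iff₀ hpos]
  nlinarith [norm_nonneg (f x), hpos]

lemma schwartz_sq_integrable {E : Type*} [NormedAddCommGroup E] [NormedSpace ℝ E]
    [MeasurableSpace E] [BorelSpace E] [FiniteDimensional ℝ E] {μ : Measure E}
    [μ.HasTemperateGrowth] (f : SchwartzMap E ℂ) :
    Integrable (fun x => ‖f x‖ ^ 2) μ := by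
  obtain ⟨C, hC, hCf⟩ := f.decay 0 0
  have hb : ∀ x, ‖f x‖ ≤ C := by
    intro x
    have := hCf x
    simpa [norm_iteratedFDeriv_zero] using this
  refine (f.integrable.norm.const_mul C).mono' ?_ ?_
  · exact (continuous_norm.comp f.continuous).pow 2 |>.aestronglyMeasurable
  · refine Filter.Eventually.of_forall fun x => ?_
    rw [Real.norm_eq_abs, abs_of_nonneg (by positivity)]
    have := hb x; nlinarith [norm_nonneg (f x)]

end decay

section fubini
variable {m : ℕ}

lemma snoc_comp_symm (g : (Fin (m+1) → ℝ) → ℝ) :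
    g ∘ (MeasurableEquiv.piFinSuccAbove (fun _ : Fin (m+1) => ℝ) (Fin.last m)).symm
      = fun p : ℝ × (Fin m → ℝ) => g (Fin.snoc p.2 p.1) := by
  funext p
  simp [MeasurableEquiv.piFinSuccAbove, Fin.insertNthEquiv, Fin.insertNth_last']

lemma integrable_snoc_prod {g : (Fin (m+1) → ℝ) → ℝ} (hg : Integrable g) :
    Integrable (fun p : ℝ × (Fin m → ℝ) => g (Fin.snoc p.2 p.1)) := by
  have mp := (volume_preserving_piFinSuccAbove (fun _ : Fin (m+1) => ℝ) (Fin.last m)).symm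
  have := (mp.integrable_comp_emb (MeasurableEquiv.measurableEmbedding _)).mpr hg
  rwa [snoc_comp_symm] at this

lemma integral_snoc_eq {g : (Fin (m+1) → ℝ) → ℝ} (hg : Integrable g) :
    ∫ z, g z = ∫ x : ℝ, ∫ y : Fin m → ℝ, g (Fin.snoc y x) := by
  have mp := (volume_preserving_piFinSuccAbove (fun _ : Fin (m+1) => ℝ) (Fin.last m)).symm
  rw [← mp.integral_comp']
  rw [show (fun p => g ((MeasurableEquiv.piFinSuccAbove (fun _ : Fin (m+1) => ℝ)
    (Fin.last m)).symm p)) = fun p : ℝ × (Fin m → ℝ) => g (Fin.snoc p.2 p.1) from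
    snoc_comp_symm g]
  have hint : Integrable (fun p : ℝ × (Fin m → ℝ) => g (Fin.snoc p.2 p.1))
      (volume.prod volume) := by
    exact integrable_snoc_prod hg
  rw [show (volume : Measure (ℝ × (Fin m → ℝ))) = volume.prod volume from Measure.volume_eq_prod ℝ (Fin m → ℝ)]
  exact integral_prod _ hint

lemma integrable_integral_snoc {g : (Fin (m+1) → ℝ) → ℝ} (hg : Integrable g) :
    Integrable (fun x : ℝ => ∫ y : Fin m → ℝ, g (Fin.snoc y x)) := by
  have hint : Integrable (fun p : ℝ × (Fin m → ℝ) => g (Fin.snoc p.2 p.1))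
      (volume.prod volume) := by
    exact integrable_snoc_prod hg
  exact hint.integral_prod_left

end fubini

section main
variable {m : ℕ}

local notation "E" => (Fin (m+1) → ℝ)
local notation "Y" => (Fin m → ℝ)

lemma norm_le_norm_snoc (y : Y) (x : ℝ) : ‖y‖ ≤ ‖(Fin.snoc y x : E)‖ := by
  apply pi_norm_le_iff_of_nonneg (norm_nonneg _) |>.2
  intro i
  have h : y i = (Fin.snoc y x : E) i.castSucc := by simp
  rw [show ‖y i‖ = ‖(Fin.snoc y x : E) i.castSucc‖ by rw [← h]]
  exact norm_le_pi_norm _ _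

lemma decay_snoc_bound (f : SchwartzMap E ℂ) :
    ∃ C : ℝ, 0 < C ∧ ∀ (x : ℝ) (y : Y), ‖f (Fin.snoc y x)‖ ≤ C * (1 + ‖y‖) ^ (-(m+1:ℕ):ℝ) := by
  obtain ⟨C, hC, hf⟩ := schwartz_decay_bound f (m+1)
  refine ⟨C, hC, fun x y => ?_⟩
  refine (hf _).trans ?_
  gcongr C * ?_
  refine Real.rpow_le_rpow_of_nonpos (by positivity) ?_ (by push_cast; linarith)
  have := norm_le_norm_snoc y x
  linarith

lemma integrable_decay_pow : Integrable (fun y : Y => (1 + ‖y‖) ^ (-(m+1:ℕ):ℝ)) := by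
  apply integrable_one_add_norm
  rw [Module.finrank_fintype_fun_eq_card]
  simp

lemma continuous_snoc (x : ℝ) : Continuous (fun y : Y => (Fin.snoc y x : E)) := by
  apply continuous_pi
  intro i
  induction i using Fin.lastCases with
  | last => simpa using continuous_const
  | cast j => simpa using continuous_apply j

end main

section main2
variable {m : ℕ}

local notation "E" => (Fin (m+1) → ℝ)
local notation "Y" => (Fin m → ℝ)

noncomputable def PD (ψ : SchwartzMap E ℂ) : SchwartzMap E ℂ :=
  (LineDeriv.lineDerivOp (Pi.single (Fin.last m) 1 : E) ψ : SchwartzMap E ℂ)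

lemma PD_apply (ψ : SchwartzMap E ℂ) (z : E) :
    PD ψ z = fderiv ℝ ψ z (Pi.single (Fin.last m) 1) := rfl

lemma nsq (u : ℂ) : ‖u‖^2 = u.re^2 + u.im^2 := by
  rw [Complex.sq_norm, Complex.normSq_apply]; ring

lemma cs2 (u w : ℂ) : |2*(u.re*w.re + u.im*w.im)| ≤ 2*(‖u‖*‖w‖) := by
  have h : (u.re*w.re+u.im*w.im)^2 ≤ (u.re^2+u.im^2)*(w.re^2+w.im^2) := by
    nlinarith [sq_nonneg (u.re*w.im - u.im*w.re)]
  have hu := nsq u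
  have hw := nsq w
  have h2 : |u.re*w.re + u.im*w.im| ≤ ‖u‖*‖w‖ := by
    nlinarith [sq_abs (u.re*w.re + u.im*w.im), abs_nonneg (u.re*w.re + u.im*w.im),
      mul_nonneg (norm_nonneg u) (norm_nonneg w), norm_nonneg u, norm_nonneg w]
  calc |2*(u.re*w.re + u.im*w.im)| = 2 * |u.re*w.re + u.im*w.im| := by
        rw [abs_mul]; norm_num
    _ ≤ 2*(‖u‖*‖w‖) := by linarith

lemma w_le_one (y : Y) : (1 + ‖y‖) ^ (-(m+1:ℕ):ℝ) ≤ 1 :=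
  Real.rpow_le_one_of_one_le_of_nonpos (by linarith [norm_nonneg y])
    (by push_cast; linarith)

lemma w_nonneg (y : Y) : 0 ≤ (1 + ‖y‖) ^ (-(m+1:ℕ):ℝ) :=
  Real.rpow_nonneg (by linarith [norm_nonneg y]) _

lemma integrable_sq_snoc (f : SchwartzMap E ℂ) (x : ℝ) :
    Integrable (fun y : Y => ‖f (Fin.snoc y x)‖^2) := by
  obtain ⟨C, hC, hb⟩ := decay_snoc_bound f
  refine (integrable_decay_pow.const_mul (C^2)).mono'
    ((f.continuous.comp (continuous_snoc x)).norm.pow 2).aestronglyMeasurable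
    (.of_forall fun y => ?_)
  have h1 := hb x y
  have hw0 := w_nonneg y
  have hw1 := w_le_one y
  rw [Real.norm_eq_abs, abs_of_nonneg (by positivity)]
  have hsq := pow_le_pow_left₀ (norm_nonneg (f (Fin.snoc y x))) h1 2
  nlinarith [hsq, mul_nonneg (mul_nonneg (sq_nonneg C) hw0) (sub_nonneg.2 hw1)]

lemma dd_cont (ψ : SchwartzMap E ℂ) (x : ℝ) :
    Continuous (fun y : Y => 2*((ψ (Fin.snoc y x)).re * (PD ψ (Fin.snoc y x)).re
      + (ψ (Fin.snoc y x)).im * (PD ψ (Fin.snoc y x)).im)) := by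
  have h1 : Continuous (fun y : Y => ψ (Fin.snoc y x)) :=
    ψ.continuous.comp (continuous_snoc x)
  have h2 : Continuous (fun y : Y => PD ψ (Fin.snoc y x)) :=
    (PD ψ).continuous.comp (continuous_snoc x)
  exact continuous_const.mul
    (((Complex.continuous_re.comp h1).mul (Complex.continuous_re.comp h2)).add
      ((Complex.continuous_im.comp h1).mul (Complex.continuous_im.comp h2)))

lemma dd_bound (ψ : SchwartzMap E ℂ) {C1 C2 : ℝ}
    (hb1 : ∀ (x : ℝ) (y : Y), ‖ψ (Fin.snoc y x)‖ ≤ C1 * (1 + ‖y‖) ^ (-(m+1:ℕ):ℝ))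
    (hb2 : ∀ (x : ℝ) (y : Y), ‖PD ψ (Fin.snoc y x)‖ ≤ C2 * (1 + ‖y‖) ^ (-(m+1:ℕ):ℝ))
    (hC1 : 0 < C1) (hC2 : 0 < C2) (x : ℝ) (y : Y) :
    |2*((ψ (Fin.snoc y x)).re * (PD ψ (Fin.snoc y x)).re
      + (ψ (Fin.snoc y x)).im * (PD ψ (Fin.snoc y x)).im)|
      ≤ 2*C1*C2 * (1 + ‖y‖) ^ (-(m+1:ℕ):ℝ) := by
  refine (cs2 _ _).trans ?_
  have h1 := hb1 x y
  have h2 := hb2 x y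
  have hw0 := w_nonneg y
  have hw1 := w_le_one y
  have hm := mul_le_mul h1 h2 (norm_nonneg _) (by positivity)
  nlinarith [hm, mul_nonneg (mul_nonneg (mul_nonneg hC1.le hC2.le) hw0) (sub_nonneg.2 hw1)]

lemma hasDerivAt_nsq (ψ : SchwartzMap E ℂ) (y : Y) (x : ℝ) :
    HasDerivAt (fun x' : ℝ => ‖ψ (Fin.snoc y x')‖^2)
      (2*((ψ (Fin.snoc y x)).re * (PD ψ (Fin.snoc y x)).re
        + (ψ (Fin.snoc y x)).im * (PD ψ (Fin.snoc y x)).im)) x := by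
  have hu : HasDerivAt (fun x' : ℝ => ψ (Fin.snoc y x')) (PD ψ (Fin.snoc y x)) x := by
    rw [PD_apply]; exact hasDerivAt_comp_snoc ψ y x
  have hre : HasDerivAt (fun x' : ℝ => (ψ (Fin.snoc y x')).re)
      ((PD ψ (Fin.snoc y x)).re) x := Complex.reCLM.hasFDerivAt.comp_hasDerivAt x hu
  have him : HasDerivAt (fun x' : ℝ => (ψ (Fin.snoc y x')).im)
      ((PD ψ (Fin.snoc y x)).im) x := Complex.imCLM.hasFDerivAt.comp_hasDerivAt x hu
  have h := (hre.pow 2).add (him.pow 2)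
  have heq : (fun x' : ℝ => (ψ (Fin.snoc y x')).re ^ 2 + (ψ (Fin.snoc y x')).im ^ 2)
      = fun x' : ℝ => ‖ψ (Fin.snoc y x')‖^2 := by
    funext x'; rw [nsq]
  change HasDerivAt (fun x' : ℝ => (ψ (Fin.snoc y x')).re ^ 2 + (ψ (Fin.snoc y x')).im ^ 2) _ x at h
  rw [heq] at h
  convert h using 1
  push_cast
  ring

lemma hasDerivAt_A (ψ : SchwartzMap E ℂ) (x₀ : ℝ) :
    Integrable (fun y : Y => 2*((ψ (Fin.snoc y x₀)).re * (PD ψ (Fin.snoc y x₀)).re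
      + (ψ (Fin.snoc y x₀)).im * (PD ψ (Fin.snoc y x₀)).im)) ∧
    HasDerivAt (fun x : ℝ => ∫ y : Y, ‖ψ (Fin.snoc y x)‖^2)
      (∫ y : Y, 2*((ψ (Fin.snoc y x₀)).re * (PD ψ (Fin.snoc y x₀)).re
        + (ψ (Fin.snoc y x₀)).im * (PD ψ (Fin.snoc y x₀)).im)) x₀ := by
  obtain ⟨C1, hC1, hb1⟩ := decay_snoc_bound ψ
  obtain ⟨C2, hC2, hb2⟩ := decay_snoc_bound (PD ψ)
  exact hasDerivAt_integral_of_dominated_loc_of_deriv_le (Metric.ball_mem_nhds x₀ one_pos)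
    (Filter.Eventually.of_forall fun x =>
      ((ψ.continuous.comp (continuous_snoc x)).norm.pow 2).aestronglyMeasurable)
    (integrable_sq_snoc ψ x₀)
    ((dd_cont ψ x₀).aestronglyMeasurable)
    (Filter.Eventually.of_forall fun y => fun x _ => by
      rw [Real.norm_eq_abs]
      exact dd_bound ψ hb1 hb2 hC1 hC2 x y)
    (integrable_decay_pow.const_mul (2*C1*C2))
    (Filter.Eventually.of_forall fun y => fun x _ => hasDerivAt_nsq ψ y x)

end main2

section main3
variable {m : ℕ}

local notation "E" => (Fin (m+1) → ℝ)
local notation "Y" => (Fin m → ℝ)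

lemma D_abs_le (ψ : SchwartzMap E ℂ) (x : ℝ) {t : ℝ} (ht : 0 < t) :
    |∫ y : Y, 2*((ψ (Fin.snoc y x)).re * (PD ψ (Fin.snoc y x)).re
      + (ψ (Fin.snoc y x)).im * (PD ψ (Fin.snoc y x)).im)|
      ≤ t * (∫ y : Y, ‖ψ (Fin.snoc y x)‖^2)
        + t⁻¹ * ∫ y : Y, ‖PD ψ (Fin.snoc y x)‖^2 := by
  have hint_d := (hasDerivAt_A ψ x).1
  have hint1 := integrable_sq_snoc ψ x
  have hint2 := integrable_sq_snoc (PD ψ) x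
  calc |∫ y : Y, 2*((ψ (Fin.snoc y x)).re * (PD ψ (Fin.snoc y x)).re
      + (ψ (Fin.snoc y x)).im * (PD ψ (Fin.snoc y x)).im)|
      ≤ ∫ y : Y, |2*((ψ (Fin.snoc y x)).re * (PD ψ (Fin.snoc y x)).re
        + (ψ (Fin.snoc y x)).im * (PD ψ (Fin.snoc y x)).im)| :=
        by
          have h := norm_integral_le_integral_norm (μ := volume)
            (fun y : Y => 2*((ψ (Fin.snoc y x)).re * (PD ψ (Fin.snoc y x)).re
              + (ψ (Fin.snoc y x)).im * (PD ψ (Fin.snoc y x)).im))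
          simp only [Real.norm_eq_abs] at h
          exact h
    _ ≤ ∫ y : Y, (t * ‖ψ (Fin.snoc y x)‖^2 + t⁻¹ * ‖PD ψ (Fin.snoc y x)‖^2) := by
        refine integral_mono hint_d.abs ((hint1.const_mul t).add (hint2.const_mul t⁻¹))
          fun y => ?_
        refine (cs2 _ _).trans ?_
        set a := ‖ψ (Fin.snoc y x)‖ with ha
        set b := ‖PD ψ (Fin.snoc y x)‖ with hb
        have h' : t*(t*a^2 + t⁻¹*b^2) - t*(2*(a*b)) = (t*a-b)^2 := by
          field_simp; ring
        nlinarith [sq_nonneg (t*a-b), ht]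
    _ = t * (∫ y : Y, ‖ψ (Fin.snoc y x)‖^2)
        + t⁻¹ * ∫ y : Y, ‖PD ψ (Fin.snoc y x)‖^2 := by
        rw [integral_add (hint1.const_mul t) (hint2.const_mul t⁻¹)]
        congr 1
        · exact integral_const_mul t _
        · exact integral_const_mul t⁻¹ _

set_option maxHeartbeats 1000000 in
lemma key_pointwise (ψ : SchwartzMap E ℂ) (x : ℝ) :
    (deriv (fun x' : ℝ => Real.sqrt ((m+1:ℝ) * ∫ y : Y, ‖ψ (Fin.snoc y x')‖^2)) x)^2
      ≤ (m+1:ℝ) * ∫ y : Y, ‖PD ψ (Fin.snoc y x)‖^2 := by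
  set A := fun x' : ℝ => ∫ y : Y, ‖ψ (Fin.snoc y x')‖^2 with hAdef
  set B := ∫ y : Y, ‖PD ψ (Fin.snoc y x)‖^2 with hBdef
  have hA0 : ∀ x', 0 ≤ A x' := fun x' => integral_nonneg fun y => sq_nonneg _
  have hB0 : 0 ≤ B := integral_nonneg fun y => sq_nonneg _
  have hq : (0:ℝ) < (m+1:ℝ) := by positivity
  by_cases h : A x = 0
  · have hz : deriv (fun x' => Real.sqrt ((m+1:ℝ)*A x')) x = 0 := by
      by_cases hd : DifferentiableAt ℝ (fun x' => Real.sqrt ((m+1:ℝ)*A x')) x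
      · apply IsLocalMin.deriv_eq_zero
        refine Filter.Eventually.of_forall fun z => ?_
        show Real.sqrt ((m+1:ℝ)*A x) ≤ Real.sqrt ((m+1:ℝ)*A z)
        rw [h, mul_zero, Real.sqrt_zero]
        exact Real.sqrt_nonneg _
      · exact deriv_zero_of_not_differentiableAt hd
    rw [hz]
    simpa using mul_nonneg hq.le hB0
  · have hA : 0 < A x := lt_of_le_of_ne (hA0 x) (Ne.symm h)
    set D := ∫ y : Y, 2*((ψ (Fin.snoc y x)).re * (PD ψ (Fin.snoc y x)).re
      + (ψ (Fin.snoc y x)).im * (PD ψ (Fin.snoc y x)).im) with hDdef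
    have hD : HasDerivAt A D x := (hasDerivAt_A ψ x).2
    have hsq : HasDerivAt (fun x' => Real.sqrt ((m+1:ℝ)*A x'))
        ((m+1:ℝ)*D / (2*Real.sqrt ((m+1:ℝ)*A x))) x := by
      have h1 : HasDerivAt (fun x' => (m+1:ℝ)*A x') ((m+1:ℝ)*D) x := hD.const_mul _
      have h2 := (Real.hasDerivAt_sqrt (mul_pos hq hA).ne').comp x h1
      convert h2 using 1
      · rfl
      · rfl
      · rfl
      · ring
    rw [hsq.deriv]
    have hle0 : ∀ t : ℝ, 0 < t → |D| ≤ t * A x + t⁻¹ * B := by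
      intro t ht
      simp only [hAdef, hBdef, hDdef]
      exact D_abs_le ψ x ht
    clear_value A B D
    have hDb : D^2 ≤ 4 * A x * B := by
      by_cases hD0 : D = 0
      · rw [hD0]
        have h4 : (0:ℝ) ≤ 4 * A x * B := mul_nonneg (mul_nonneg (by norm_num) hA.le) hB0
        simpa using h4
      · have habs : 0 < |D| := abs_pos.2 hD0
        have ht : 0 < |D|/(2*A x) := div_pos habs (by linarith)
        have hle : |D| ≤ |D|/(2*A x) * A x + (|D|/(2*A x))⁻¹ * B := hle0 _ ht
        have hsimp : |D|/(2*A x) * A x = |D|/2 := by field_simp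
        have hsimp2 : (|D|/(2*A x))⁻¹ * B = (2*A x*B)/|D| := by
          field_simp
        rw [hsimp, hsimp2] at hle
        have hmul := mul_le_mul_of_nonneg_right hle (abs_nonneg D)
        have he1 : (2*A x*B)/|D| * |D| = 2*A x*B := by field_simp
        have he2 : |D| * |D| = D^2 := by rw [← abs_mul, abs_mul_self]; ring
        nlinarith [hmul, he1, he2]
    have hs : Real.sqrt ((m+1:ℝ)*A x)^2 = (m+1:ℝ)*A x := Real.sq_sqrt (by positivity)
    have hspos : 0 < Real.sqrt ((m+1:ℝ)*A x) := Real.sqrt_pos.2 (by positivity)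
    rw [div_pow, div_le_iff₀ (show (0:ℝ) < (2*Real.sqrt ((m+1:ℝ)*A x))^2 by positivity)]
    have hexp : (2*Real.sqrt ((m+1:ℝ)*A x))^2 = 4*((m+1:ℝ)*A x) := by
      rw [mul_pow, hs]; ring
    rw [hexp]
    nlinarith [hDb, hB0, hA, hq, mul_le_mul_of_nonneg_left hDb (sq_nonneg ((m:ℝ)+1))]

end main3

section main4
variable {m : ℕ}

local notation "E" => (Fin (m+1) → ℝ)
local notation "Y" => (Fin m → ℝ)

lemma part1_ineq (ψ : SchwartzMap E ℂ) :
    (∫ x : ℝ, (deriv (fun x' : ℝ =>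
        Real.sqrt ((m+1:ℝ) * ∫ y : Y, ‖ψ (Fin.snoc y x')‖^2)) x)^2)
      ≤ (m+1:ℝ) * ∫ z : E, ‖PD ψ z‖^2 := by
  have hG : Integrable (fun z : E => ‖PD ψ z‖^2) := schwartz_sq_integrable _
  have hB : Integrable (fun x : ℝ => ∫ y : Y, ‖PD ψ (Fin.snoc y x)‖^2) :=
    integrable_integral_snoc hG
  have hmono :
      (∫ x : ℝ, (deriv (fun x' : ℝ =>
        Real.sqrt ((m+1:ℝ) * ∫ y : Y, ‖ψ (Fin.snoc y x')‖^2)) x)^2)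
      ≤ ∫ x : ℝ, (m+1:ℝ) * ∫ y : Y, ‖PD ψ (Fin.snoc y x)‖^2 :=
    integral_mono_of_nonneg (Filter.Eventually.of_forall fun x => sq_nonneg _)
      (hB.const_mul _) (Filter.Eventually.of_forall fun x => key_pointwise ψ x)
  refine hmono.trans (le_of_eq ?_)
  rw [integral_const_mul, ← integral_snoc_eq hG]

lemma perm_integral_eq (ψ : SchwartzMap E ℂ)
    (hsymm : ∀ (p : Equiv.Perm (Fin (m + 1))) (x : E), ψ (x ∘ p) = ψ x)
    (i : Fin (m+1)) :
    (∫ x : E, ‖fderiv ℝ ψ x (Pi.single i 1)‖^2)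
      = ∫ x : E, ‖fderiv ℝ ψ x (Pi.single (Fin.last m) 1)‖^2 := by
  set σ := Equiv.swap i (Fin.last m) with hσ
  set L : E →L[ℝ] E := ContinuousLinearMap.pi
    (fun j => ContinuousLinearMap.proj (R := ℝ) (φ := fun _ : Fin (m+1) => ℝ) (σ j)) with hL
  have hLapp : ∀ z : E, L z = z ∘ σ := fun z => rfl
  have hLsingle : L (Pi.single i 1) = Pi.single (Fin.last m) 1 := by
    funext j
    show (Pi.single i (1:ℝ) : E) (σ j) = (Pi.single (Fin.last m) (1:ℝ) : E) j
    rw [Pi.single_apply, Pi.single_apply]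
    refine if_congr ?_ rfl rfl
    rw [Equiv.apply_eq_iff_eq_symm_apply]
    rw [hσ, Equiv.symm_swap, Equiv.swap_apply_left]
  have hfd : ∀ x : E, fderiv ℝ ψ x (Pi.single i 1)
      = fderiv ℝ ψ (x ∘ σ) (Pi.single (Fin.last m) 1) := by
    intro x
    have hcomp : HasFDerivAt (fun z : E => ψ (L z)) ((fderiv ℝ ψ (L x)).comp L) x :=
      (ψ.differentiableAt.hasFDerivAt).comp x L.hasFDerivAt
    have hids : (fun z : E => ψ (L z)) = fun z : E => ψ z := by
      funext z
      rw [hLapp z]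
      exact hsymm σ z
    rw [hids] at hcomp
    have hfdeq := hcomp.fderiv
    calc fderiv ℝ ψ x (Pi.single i 1)
        = ((fderiv ℝ ψ (L x)).comp L) (Pi.single i 1) := by rw [← hfdeq]
      _ = fderiv ℝ ψ (L x) (L (Pi.single i 1)) := rfl
      _ = fderiv ℝ ψ (x ∘ σ) (Pi.single (Fin.last m) 1) := by
          rw [hLsingle, hLapp]
  have mp := volume_measurePreserving_piCongrLeft (fun _ : Fin (m+1) => ℝ) σ.symm
  have hT : ∀ x : E, (MeasurableEquiv.piCongrLeft (fun _ : Fin (m+1) => ℝ) σ.symm) x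
      = x ∘ σ := by
    intro x
    funext j
    have h := MeasurableEquiv.piCongrLeft_apply_apply σ.symm
      (β := fun _ : Fin (m+1) => ℝ) x (σ j)
    simpa using h
  calc (∫ x : E, ‖fderiv ℝ ψ x (Pi.single i 1)‖^2)
      = ∫ x : E, ‖fderiv ℝ ψ
          ((MeasurableEquiv.piCongrLeft (fun _ : Fin (m+1) => ℝ) σ.symm) x)
          (Pi.single (Fin.last m) 1)‖^2 := by
        congr 1
        funext x
        rw [hfd x, hT x]
    _ = ∫ x : E, ‖fderiv ℝ ψ x (Pi.single (Fin.last m) 1)‖^2 :=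
        mp.integral_comp'
          (fun z : E => ‖fderiv ℝ (⇑ψ) z (Pi.single (Fin.last m) 1)‖^2)

lemma kinetic_eq (ψ : SchwartzMap E ℂ)
    (hsymm : ∀ (p : Equiv.Perm (Fin (m + 1))) (x : E), ψ (x ∘ p) = ψ x) :
    kineticHO m (fun z => ψ z) = (m+1:ℝ) * ∫ z : E, ‖PD ψ z‖^2 := by
  unfold kineticHO
  have hterm : ∀ i : Fin (m+1),
      (∫ x : E, ‖deriv (fun t : ℝ => ψ (Function.update x i t)) (x i)‖^2)
        = ∫ z : E, ‖PD ψ z‖^2 := by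
    intro i
    have h1 : (fun x : E => ‖deriv (fun t : ℝ => ψ (Function.update x i t)) (x i)‖^2)
        = fun x : E => ‖fderiv ℝ ψ x (Pi.single i 1)‖^2 := by
      funext x
      rw [deriv_comp_update]
    rw [h1, perm_integral_eq ψ hsymm i]
    rfl
  rw [Finset.sum_congr rfl (fun i _ => hterm i)]
  rw [Finset.sum_const, Finset.card_univ, Fintype.card_fin, nsmul_eq_mul]
  push_cast
  ring

end main4

section part2
variable {m : ℕ}

local notation "E" => (Fin (m+1) → ℝ)
local notation "Y" => (Fin m → ℝ)

lemma pow_succ_eq_one_nonneg {x : ℝ} (h0 : 0 ≤ x) {n : ℕ} (h : x^(n+1) = 1) : x = 1 := by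
  rcases lt_trichotomy x 1 with h1 | h1 | h1
  · exfalso
    have := pow_lt_one₀ h0 h1 (Nat.succ_ne_zero n)
    rw [h] at this
    exact lt_irrefl 1 this
  · exact h1
  · exfalso
    have := one_lt_pow₀ h1 (Nat.succ_ne_zero n)
    rw [h] at this
    exact lt_irrefl 1 this

lemma part2_eq (ψ : SchwartzMap E ℂ)
    (hsymm : ∀ (p : Equiv.Perm (Fin (m + 1))) (x : E), ψ (x ∘ p) = ψ x)
    (hnorm : ∫ x : E, ‖ψ x‖ ^ 2 = 1)
    (hprod : ∀ x : E, ψ x = ∏ i : Fin (m + 1),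
        (Real.sqrt (densityHO m (fun z => ψ z) (x i) / (m + 1 : ℝ)) : ℂ)) :
    kineticHO m (fun z => ψ z)
      = ∫ x : ℝ, (deriv (fun y : ℝ =>
          Real.sqrt (densityHO m (fun z => ψ z) y)) x) ^ 2 := by
  set φ : ℝ → ℝ := fun t => Real.sqrt (densityHO m (fun z => ψ z) t / (m + 1 : ℝ)) with hφdef
  have hφ0 : ∀ t, 0 ≤ φ t := fun t => Real.sqrt_nonneg _
  have hψx : ∀ x : E, ψ x = ∏ i : Fin (m+1), (φ (x i) : ℂ) := hprod
  have hq : (0:ℝ) < (m:ℝ) + 1 := by positivity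
  have hA0 : ∀ t : ℝ, 0 ≤ ∫ y : Y, ‖ψ (Fin.snoc y t)‖^2 :=
    fun t => integral_nonneg fun y => sq_nonneg _
  have hφsq : ∀ t : ℝ, φ t ^ 2 = ∫ y : Y, ‖ψ (Fin.snoc y t)‖^2 := by
    intro t
    have h1 : densityHO m (fun z => ψ z) t / (m + 1 : ℝ)
        = ∫ y : Y, ‖ψ (Fin.snoc y t)‖^2 := by
      unfold densityHO
      field_simp
    rw [hφdef]
    simp only
    rw [h1, Real.sq_sqrt (hA0 t)]
  -- φ is positive somewhere
  have hex : ∃ a : ℝ, 0 < φ a := by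
    by_contra hc
    push_neg at hc
    have hz : ∀ t, φ t = 0 := fun t => le_antisymm (hc t) (hφ0 t)
    have hψ0 : ∀ x : E, ψ x = 0 := by
      intro x
      rw [hψx x]
      refine Finset.prod_eq_zero (Finset.mem_univ (0 : Fin (m+1))) ?_
      rw [hz]
      norm_num
    have h0 : (∫ x : E, ‖ψ x‖^2) = 0 := by
      rw [show (fun x : E => ‖ψ x‖^2) = fun _ : E => (0:ℝ) by
        funext x; rw [hψ0 x]; simp]
      simp
    rw [hnorm] at h0
    norm_num at h0
  obtain ⟨a, ha⟩ := hex
  -- differentiability of φ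
  have hφC : ∀ t : ℝ, (φ t : ℂ)
      = ψ (Function.update (fun _ => a : E) 0 t) * ((φ a : ℂ)^m)⁻¹ := by
    intro t
    rw [hψx]
    have hupd : (fun i : Fin (m+1) => ((φ ((Function.update (fun _ => a : E) 0 t) i) : ℂ)))
        = Function.update (fun _ : Fin (m+1) => (φ a : ℂ)) 0 (φ t : ℂ) := by
      funext i
      by_cases hi : i = 0
      · subst hi; simp
      · simp [Function.update_of_ne hi]
    rw [show (∏ i : Fin (m+1),
        ((φ ((Function.update (fun _ => a : E) 0 t) i) : ℂ)))
      = ∏ i : Fin (m+1),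
        Function.update (fun _ : Fin (m+1) => (φ a : ℂ)) 0 (φ t : ℂ) i by rw [hupd]]
    rw [Finset.prod_update_of_mem (Finset.mem_univ (0 : Fin (m+1)))]
    rw [Finset.prod_const]
    have hcard : (Finset.univ \ {(0 : Fin (m+1))}).card = m := by
      rw [Finset.sdiff_singleton_eq_erase, Finset.card_erase_of_mem (Finset.mem_univ _),
        Finset.card_univ, Fintype.card_fin]
      simp
    rw [hcard]
    have hφa : (φ a : ℂ)^m ≠ 0 := pow_ne_zero m (Complex.ofReal_ne_zero.2 ha.ne')
    field_simp
  have hφdiff : Differentiable ℝ φ := by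
    intro t
    have h1 : DifferentiableAt ℝ (fun t : ℝ => ψ (Function.update (fun _ => a : E) 0 t)) t :=
      (hasDerivAt_comp_update ψ _ 0 t).differentiableAt
    have h2 : DifferentiableAt ℝ (fun t : ℝ => (φ t : ℂ)) t := by
      rw [show (fun t : ℝ => (φ t : ℂ))
        = fun t => ψ (Function.update (fun _ => a : E) 0 t) * ((φ a : ℂ)^m)⁻¹
        from funext hφC]
      exact h1.mul_const _
    have h3 : φ = fun t => ((φ t : ℂ)).re := by
      funext t; simp
    rw [h3]
    exact (Complex.reCLM.differentiable.differentiableAt).comp t h2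
  have hφC' : ∀ t : ℝ, HasDerivAt (fun s : ℝ => (φ s : ℂ)) ((Complex.ofReal (deriv φ t))) t := by
    intro t
    exact Complex.ofRealCLM.hasFDerivAt.comp_hasDerivAt t (hφdiff t).hasDerivAt
  -- product formula on snoc
  have hsnoc : ∀ (y : Y) (t : ℝ),
      ψ (Fin.snoc y t) = (∏ j : Fin m, (φ (y j) : ℂ)) * (φ t : ℂ) := by
    intro y t
    rw [hψx]
    rw [Fin.prod_univ_castSucc]
    simp
  have hPD : ∀ (y : Y) (x : ℝ),
      PD ψ (Fin.snoc y x) = (∏ j : Fin m, (φ (y j) : ℂ)) * (Complex.ofReal (deriv φ x)) := by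
    intro y x
    have hd : HasDerivAt (fun t : ℝ => ψ (Fin.snoc y t))
        ((∏ j : Fin m, (φ (y j) : ℂ)) * (Complex.ofReal (deriv φ x))) x := by
      have h1 := (hφC' x).const_mul (∏ j : Fin m, (φ (y j) : ℂ))
      exact h1.congr_of_eventuallyEq (Filter.Eventually.of_forall fun t => hsnoc y t)
    have h2 := hasDerivAt_comp_snoc ψ y x
    rw [PD_apply]
    exact h2.unique hd
  have hnormR : ∀ r : ℝ, ‖(r : ℂ)‖ = |r| := fun r => by
    rw [Complex.norm_real, Real.norm_eq_abs]
  have hPDsq : ∀ (y : Y) (x : ℝ),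
      ‖PD ψ (Fin.snoc y x)‖^2 = (deriv φ x)^2 * ∏ j : Fin m, (φ (y j))^2 := by
    intro y x
    rw [hPD, norm_mul, mul_pow, norm_prod]
    rw [show (∏ j : Fin m, ‖(φ (y j) : ℂ)‖) = ∏ j : Fin m, |φ (y j)| by
      refine Finset.prod_congr rfl fun j _ => hnormR _]
    rw [hnormR, ← Finset.prod_pow]
    rw [show (∏ j : Fin m, |φ (y j)|^2) = ∏ j : Fin m, (φ (y j))^2 by
      refine Finset.prod_congr rfl fun j _ => sq_abs _]
    rw [sq_abs]
    ring
  -- normalization of φ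
  have hint1 : (∫ t : ℝ, φ t ^ 2) = 1 := by
    have hEprod : ∀ x : E, ‖ψ x‖^2 = ∏ i : Fin (m+1), (φ (x i))^2 := by
      intro x
      rw [hψx, norm_prod]
      rw [show (∏ i : Fin (m+1), ‖(φ (x i) : ℂ)‖) = ∏ i : Fin (m+1), |φ (x i)| by
        refine Finset.prod_congr rfl fun i _ => hnormR _]
      rw [← Finset.prod_pow]
      refine Finset.prod_congr rfl fun i _ => sq_abs _
    have h3 := integral_fintype_prod_volume_eq_pow (𝕜 := ℝ) (ι := Fin (m+1)) (fun t => φ t ^ 2)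
    rw [Fintype.card_fin] at h3
    have h2 : (∫ x : E, ∏ i : Fin (m+1), (φ (x i))^2) = 1 := by
      rw [← hnorm]
      congr 1
      funext x
      rw [hEprod x]
    rw [h3] at h2
    exact pow_succ_eq_one_nonneg (integral_nonneg fun t => sq_nonneg _) h2
  have hinner : (∫ y : Y, ∏ j : Fin m, (φ (y j))^2) = 1 := by
    have h3 := integral_fintype_prod_volume_eq_pow (𝕜 := ℝ) (ι := Fin m) (fun t => φ t ^ 2)
    rw [Fintype.card_fin] at h3
    rw [h3, hint1, one_pow]
  have hBx : ∀ x : ℝ, (∫ y : Y, ‖PD ψ (Fin.snoc y x)‖^2) = (deriv φ x)^2 := by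
    intro x
    rw [show (fun y : Y => ‖PD ψ (Fin.snoc y x)‖^2)
      = fun y : Y => (deriv φ x)^2 * ∏ j : Fin m, (φ (y j))^2
      from funext fun y => hPDsq y x]
    rw [integral_const_mul, hinner, mul_one]
  have hGint : Integrable (fun z : E => ‖PD ψ z‖^2) := schwartz_sq_integrable _
  have hsplit : (∫ z : E, ‖PD ψ z‖^2) = ∫ x : ℝ, (deriv φ x)^2 := by
    rw [integral_snoc_eq hGint]
    congr 1
    funext x
    exact hBx x
  have hkin := kinetic_eq ψ hsymm
  -- identify the density with φ
  have hsqrtρ : (fun t : ℝ => Real.sqrt (densityHO m (fun z => ψ z) t))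
      = fun t : ℝ => Real.sqrt ((m:ℝ) + 1) * φ t := by
    funext t
    have hd : densityHO m (fun z => ψ z) t = ((m:ℝ)+1) * φ t^2 := by
      rw [hφsq t]
      unfold densityHO
      norm_num
    rw [hd, Real.sqrt_mul hq.le, Real.sqrt_sq (hφ0 t)]
  have hderivρ : ∀ x : ℝ, deriv (fun t : ℝ => Real.sqrt (densityHO m (fun z => ψ z) t)) x
      = Real.sqrt ((m:ℝ)+1) * deriv φ x := by
    intro x
    rw [hsqrtρ]
    exact deriv_const_mul _ (hφdiff x)
  rw [hkin, hsplit]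
  rw [show (fun x : ℝ => (deriv (fun y : ℝ =>
      Real.sqrt (densityHO m (fun z => ψ z) y)) x)^2)
    = fun x : ℝ => ((m:ℝ)+1) * (deriv φ x)^2 from funext fun x => by
      rw [hderivρ x, mul_pow, Real.sq_sqrt hq.le]]
  rw [integral_const_mul]

end part2

/-- Hoffmann-Ostenhof inequality in one dimension: for a smooth rapidly decaying
symmetric normalized `q`-particle wave function (`q = m+1`), the kinetic energy
dominates the kinetic energy of `√ρ_ψ`; equality holds for the product state
`ψ = ∏ᵢ φ(xᵢ)` with `φ = √(ρ_ψ/q)`. -/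
theorem hoffmannOstenhof_one_dim (m : ℕ) (ψ : SchwartzMap (Fin (m + 1) → ℝ) ℂ)
    (hsymm : ∀ (p : Equiv.Perm (Fin (m + 1))) (x : Fin (m + 1) → ℝ),
      ψ (x ∘ p) = ψ x)
    (hnorm : ∫ x : Fin (m + 1) → ℝ, ‖ψ x‖ ^ 2 = 1) :
    (∫ x : ℝ, (deriv (fun y : ℝ => Real.sqrt (densityHO m (fun z => ψ z) y)) x) ^ 2)
      ≤ kineticHO m (fun z => ψ z) ∧
    ((∀ x : Fin (m + 1) → ℝ, ψ x = ∏ i : Fin (m + 1),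
        (Real.sqrt (densityHO m (fun z => ψ z) (x i) / (m + 1 : ℝ)) : ℂ)) →
      kineticHO m (fun z => ψ z)
        = ∫ x : ℝ, (deriv (fun y : ℝ =>
            Real.sqrt (densityHO m (fun z => ψ z) y)) x) ^ 2) := by
  constructor
  · have h := part1_ineq ψ
    have hk := kinetic_eq ψ hsymm
    rw [hk]
    exact h
  · intro hp
    exact part2_eq ψ hsymm hnorm hp
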